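/- Let φ ∈ ℝ[x_1,…,x_h] be a homogeneous polynomial of degree 3 and let y ∈ ℝ^h satisfy φ(y) < 0. Then the real symmetric h×h matrix M with entries M_{ij} = φ(y)·(∂²φ/∂x_i∂x_j)(y) − (∂φ/∂x_i)(y)·(∂φ/∂x_j)(y) is negative definite if and only if the Hessian matrix ((∂²φ/∂x_i∂x_j)(y))_{1≤i,j≤h} has exactly h−1 positive eigenvalues and exactly 1 negative eigenvalue (counted with multiplicity). -/

import Mathlib

open MvPolynomial Matrix
open Finset


lemma euler_poly {h n : ℕ} (φ : MvPolynomial (Fin h) ℝ) (hφ : φ.IsHomogeneous n) :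
    ∑ j, X j * pderiv j φ = n • φ := by
  conv_lhs => rw [φ.as_sum]
  conv_rhs => rw [φ.as_sum, Finset.smul_sum]
  simp only [map_sum, Finset.mul_sum]
  rw [Finset.sum_comm]
  refine Finset.sum_congr rfl fun v hv => ?_
  have hdeg : ∑ j : Fin h, v j = n := by
    have h1 : (Finsupp.weight (1 : Fin h → ℕ)) v = n := hφ (mem_support_iff.mp hv)
    rw [Finsupp.weight_apply] at h1
    simp only [Finsupp.sum, Pi.one_apply, smul_eq_mul, mul_one] at h1
    rw [← h1]
    exact (Finset.sum_subset (Finset.subset_univ _) (fun x _ hx => Finsupp.notMem_support_iff.mp hx)).symm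
  have key : ∀ j : Fin h, X j * pderiv j (monomial v (coeff v φ)) = (v j) • monomial v (coeff v φ) := by
    intro j
    rw [pderiv_monomial]
    by_cases hj : v j = 0
    · simp [hj]
    · have hvv : Finsupp.single j 1 + (v - Finsupp.single j 1) = v := by
        ext k
        simp only [Finsupp.coe_add, Finsupp.coe_tsub, Pi.add_apply, Pi.sub_apply]
        by_cases hk : k = j
        · subst hk; simp only [Finsupp.single_eq_same]; omega
        · simp [Finsupp.single_eq_of_ne' (Ne.symm hk)]
      rw [X, monomial_mul, smul_monomial, hvv, one_mul, nsmul_eq_mul, mul_comm]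
  rw [Finset.sum_congr rfl fun j _ => key j, ← Finset.sum_smul, hdeg]

lemma euler_poly2 {h : ℕ} (φ : MvPolynomial (Fin h) ℝ) (hφ : φ.IsHomogeneous 3) (i : Fin h) :
    ∑ j, X j * pderiv i (pderiv j φ) = 2 • pderiv i φ := by
  have h1 := congrArg (pderiv i) (euler_poly φ hφ)
  rw [map_sum, map_nsmul] at h1
  simp only [pderiv_mul] at h1
  rw [Finset.sum_add_distrib] at h1
  have h2 : ∑ j : Fin h, pderiv i (X j) * pderiv j φ = pderiv i φ := by
    rw [Finset.sum_eq_single i]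
    · simp
    · intro j _ hj; rw [pderiv_X_of_ne hj, zero_mul]
    · simp
  rw [h2] at h1
  have : (3 : ℕ) • pderiv i φ = pderiv i φ + 2 • pderiv i φ := by
    rw [succ_nsmul']
  rw [this] at h1
  exact add_left_cancel h1

lemma core {h : ℕ} (lam η : Fin h → ℝ) (c : ℝ) (hc : c < 0)
    (hη : ∑ i, lam i * (η i * η i) = 6 * c) :
    (∀ u : Fin h → ℝ, u ≠ 0 →
        c * (∑ i, lam i * (u i * u i)) - ((1/2) * ∑ i, lam i * (η i * u i))^2 < 0) ↔
      ((Finset.univ.filter fun i => 0 < lam i).card = h - 1 ∧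
        (Finset.univ.filter fun i => lam i < 0).card = 1) := by
  have h6c : (6:ℝ) * c ≠ 0 := by nlinarith
  constructor
  · intro Hyp
    have KeyPos : ∀ z : Fin h → ℝ, z ≠ 0 → (∑ i, lam i * (η i * z i)) = 0 →
        0 < ∑ i, lam i * (z i * z i) := by
      intro z hz hLz
      have := Hyp z hz
      rw [hLz] at this
      nlinarith
    have Claim1 : ∃ i₀, lam i₀ < 0 := by
      by_contra hno
      push_neg at hno
      have : (0:ℝ) ≤ ∑ i, lam i * (η i * η i) :=
        Finset.sum_nonneg fun i _ => mul_nonneg (hno i) (mul_self_nonneg _)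
      linarith
    have ClaimNZ : ∀ i, lam i ≤ 0 → lam i * η i ≠ 0 := by
      intro i hle h0
      set z₁ : Fin h → ℝ := Pi.single i 1 with hz₁def
      have hz : z₁ ≠ (0 : Fin h → ℝ) := by
        intro hzz
        have := congrFun hzz i
        simp [hz₁def] at this
      have hL : (∑ k, lam k * (η k * z₁ k)) = 0 := by
        rw [Finset.sum_eq_single i]
        · rw [hz₁def]; simp only [Pi.single_eq_same, mul_one]; exact h0
        · intro k _ hk; simp [hz₁def, Pi.single_eq_of_ne hk]
        · simp
      have hQ := KeyPos _ hz hL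
      rw [Finset.sum_eq_single i] at hQ
      · simp [hz₁def] at hQ; linarith
      · intro k _ hk; simp [hz₁def, Pi.single_eq_of_ne hk]
      · simp
    have Claim2 : ∀ i j, i ≠ j → lam i ≤ 0 → lam j ≤ 0 → False := by
      intro i j hij hi hj
      set a := lam i * η i with ha
      set b := lam j * η j with hb
      have hane : a ≠ 0 := ClaimNZ i hi
      have hbne : b ≠ 0 := ClaimNZ j hj
      set z : Fin h → ℝ := fun k => if k = i then b else if k = j then -a else 0 with hzdef
      have hz : z ≠ 0 := by
        intro hzz
        have := congrFun hzz i
        simp [hzdef] at this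
        exact hbne this
      have hterm : ∀ k, lam k * (η k * z k) =
          (if k = i then lam i * η i * b else 0) + (if k = j then lam j * η j * (-a) else 0) := by
        intro k
        by_cases h1 : k = i
        · subst h1; rw [if_neg hij]; simp [hzdef]; try ring
        · by_cases h2 : k = j
          · subst h2; simp [hzdef, h1]; try ring
          · simp [hzdef, h1, h2]
      have hL : (∑ k, lam k * (η k * z k)) = 0 := by
        rw [Finset.sum_congr rfl fun k _ => hterm k, Finset.sum_add_distrib,
          Finset.sum_ite_eq' univ i, Finset.sum_ite_eq' univ j]
        simp [← ha, ← hb]; ring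
      have hQ := KeyPos z hz hL
      have hterm2 : ∀ k, lam k * (z k * z k) =
          (if k = i then lam i * (b*b) else 0) + (if k = j then lam j * (a*a) else 0) := by
        intro k
        by_cases h1 : k = i
        · subst h1; rw [if_neg hij]; simp [hzdef]; try ring
        · by_cases h2 : k = j
          · subst h2; simp [hzdef, h1]; try ring
          · simp [hzdef, h1, h2]
      rw [Finset.sum_congr rfl fun k _ => hterm2 k, Finset.sum_add_distrib,
        Finset.sum_ite_eq' univ i, Finset.sum_ite_eq' univ j] at hQ
      simp only [mem_univ, if_true] at hQ
      nlinarith [mul_self_nonneg a, mul_self_nonneg b]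
    have hcard_le : (univ.filter fun i => lam i ≤ 0).card ≤ 1 := by
      rw [Finset.card_le_one]
      intro i hi j hj
      by_contra hij
      exact Claim2 i j hij (mem_filter.mp hi).2 (mem_filter.mp hj).2
    obtain ⟨i₀, hi₀⟩ := Claim1
    have hsub : (univ.filter fun i => lam i < 0) ⊆ (univ.filter fun i => lam i ≤ 0) :=
      Finset.monotone_filter_right _ fun i _ hi => le_of_lt hi
    have h1le : 1 ≤ (univ.filter fun i => lam i < 0).card :=
      Finset.card_pos.mpr ⟨i₀, mem_filter.mpr ⟨mem_univ _, hi₀⟩⟩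
    have hneg1 : (univ.filter fun i => lam i < 0).card = 1 :=
      le_antisymm (le_trans (Finset.card_le_card hsub) hcard_le) h1le
    refine ⟨?_, hneg1⟩
    have hpart := Finset.card_filter_add_card_filter_not
      (s := (univ : Finset (Fin h))) (p := fun i => 0 < lam i)
    have hfeq : (univ.filter fun i => ¬ 0 < lam i) = (univ.filter fun i => lam i ≤ 0) := by
      apply Finset.filter_congr; intro i _; simp [not_lt]
    rw [hfeq] at hpart
    have hle1 : (univ.filter fun i => lam i ≤ 0).card = 1 :=
      le_antisymm hcard_le (le_trans h1le (Finset.card_le_card hsub))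
    rw [hle1, Finset.card_univ, Fintype.card_fin] at hpart
    omega
  · rintro ⟨hpos, hneg⟩ u hu
    obtain ⟨i₀, hfil⟩ := Finset.card_eq_one.mp hneg
    have hlam0 : lam i₀ < 0 := by
      have : i₀ ∈ univ.filter fun i => lam i < 0 := hfil ▸ Finset.mem_singleton_self i₀
      exact (mem_filter.mp this).2
    have hothers : ∀ i, i ≠ i₀ → 0 < lam i := by
      have hdisj : Disjoint (univ.filter fun i => 0 < lam i) (univ.filter fun i => lam i < 0) := by
        rw [Finset.disjoint_left]
        intro a ha hb
        have h1 := (mem_filter.mp ha).2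
        have h2 := (mem_filter.mp hb).2
        linarith
      have hhpos : 0 < h := i₀.pos
      have huniv : (univ.filter fun i => 0 < lam i) ∪ (univ.filter fun i => lam i < 0) = univ := by
        apply Finset.eq_univ_of_card
        rw [Finset.card_union_of_disjoint hdisj, hpos, hneg, Fintype.card_fin]
        omega
      intro i hi
      have : i ∈ (univ.filter fun i => 0 < lam i) ∪ (univ.filter fun i => lam i < 0) := by
        rw [huniv]; exact mem_univ i
      rcases Finset.mem_union.mp this with hmem | hmem
      · exact (mem_filter.mp hmem).2
      · exfalso; apply hi
        have : i ∈ ({i₀} : Finset (Fin h)) := hfil ▸ hmem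
        exact Finset.mem_singleton.mp this
    have hη0 : η i₀ ≠ 0 := by
      intro hez
      have : (0:ℝ) ≤ ∑ i, lam i * (η i * η i) := by
        apply Finset.sum_nonneg
        intro i _
        by_cases hii : i = i₀
        · subst hii; rw [hez]; simp
        · exact mul_nonneg (le_of_lt (hothers i hii)) (mul_self_nonneg _)
      linarith
    have KeyPos : ∀ z : Fin h → ℝ, z ≠ 0 → (∑ i, lam i * (η i * z i)) = 0 →
        0 < ∑ i, lam i * (z i * z i) := by
      intro z hz hLz
      set wv : Fin h → ℝ := fun k => z i₀ * η k - η i₀ * z k with hwvdef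
      have hwv0 : wv i₀ = 0 := by simp [hwvdef]; ring
      have hQw : (∑ k, lam k * (wv k * wv k)) =
          6*c*(z i₀ * z i₀) - 2*(z i₀ * η i₀)*0 + (η i₀ * η i₀) * (∑ k, lam k * (z k * z k)) := by
        have hterm : ∀ k, lam k * (wv k * wv k) =
            (z i₀ * z i₀) * (lam k * (η k * η k)) - (2*(z i₀ * η i₀)) * (lam k * (η k * z k))
              + (η i₀ * η i₀) * (lam k * (z k * z k)) := by
          intro k; simp only [hwvdef]; ring
        rw [Finset.sum_congr rfl fun k _ => hterm k, Finset.sum_add_distrib,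
          Finset.sum_sub_distrib, ← Finset.mul_sum, ← Finset.mul_sum, ← Finset.mul_sum,
          hη, hLz]
        ring
      rw [mul_zero, sub_zero] at hQw
      by_cases hw : wv = 0
      · exfalso
        have hk : ∀ k, z i₀ * η k = η i₀ * z k := by
          intro k
          have := congrFun hw k
          simp only [hwvdef, Pi.zero_apply] at this
          linarith
        have hzz : η i₀ * (∑ i, lam i * (η i * z i)) = z i₀ * (∑ i, lam i * (η i * η i)) := by
          rw [Finset.mul_sum, Finset.mul_sum]
          refine Finset.sum_congr rfl fun k _ => ?_
          linear_combination (-(lam k * η k)) * hk k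
        rw [hLz, hη, mul_zero] at hzz
        have hz0 : z i₀ = 0 := by
          rcases mul_eq_zero.mp hzz.symm with h1 | h1
          · exact h1
          · exact absurd h1 h6c
        apply hz
        funext k
        have h2 := hk k
        rw [hz0, zero_mul] at h2
        have := mul_eq_zero.mp h2.symm
        rcases this with h3 | h3
        · exact absurd h3 hη0
        · exact h3
      · have hQwpos : 0 < ∑ k, lam k * (wv k * wv k) := by
          obtain ⟨k₀, hk₀⟩ := Function.ne_iff.mp hw
          have hk₀i₀ : k₀ ≠ i₀ := by
            intro hh; rw [hh, hwv0] at hk₀; exact hk₀ rfl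
          apply Finset.sum_pos'
          · intro k _
            by_cases hki : k = i₀
            · subst hki; rw [hwv0]; simp
            · exact mul_nonneg (le_of_lt (hothers k hki)) (mul_self_nonneg _)
          · exact ⟨k₀, mem_univ _, mul_pos (hothers k₀ hk₀i₀)
              (mul_self_pos.mpr (by simpa using hk₀))⟩
        by_contra hQz
        push_neg at hQz
        have h1 : (η i₀ * η i₀) * (∑ k, lam k * (z k * z k)) ≤ 0 :=
          mul_nonpos_of_nonneg_of_nonpos (mul_self_nonneg _) hQz
        have h2 : 6*c*(z i₀ * z i₀) ≤ 0 := by nlinarith [mul_self_nonneg (z i₀)]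
        linarith
    set t := (∑ i, lam i * (η i * u i))/(6*c) with htdef
    set z : Fin h → ℝ := fun k => u k - t * η k with hzdef
    have hLz : (∑ i, lam i * (η i * z i)) = 0 := by
      have hterm : ∀ k, lam k * (η k * z k) = lam k * (η k * u k) - t * (lam k * (η k * η k)) := by
        intro k; simp only [hzdef]; ring
      rw [Finset.sum_congr rfl fun k _ => hterm k, Finset.sum_sub_distrib, ← Finset.mul_sum, hη]
      rw [htdef]
      field_simp
      rw [div_self hc.ne]; ring
    have hLu : (∑ i, lam i * (η i * u i)) = 6*c*t := by
      rw [htdef]; field_simp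
      rw [mul_div_assoc, div_self hc.ne, mul_one]
    have hQu : (∑ i, lam i * (u i * u i)) =
        (∑ i, lam i * (z i * z i)) + 2*t*(∑ i, lam i * (η i * z i)) + t*t*(6*c) := by
      have hterm : ∀ k, lam k * (u k * u k) = lam k * (z k * z k)
          + (2*t) * (lam k * (η k * z k)) + (t*t) * (lam k * (η k * η k)) := by
        intro k; simp only [hzdef]; ring
      rw [Finset.sum_congr rfl fun k _ => hterm k, Finset.sum_add_distrib,
        Finset.sum_add_distrib, ← Finset.mul_sum, ← Finset.mul_sum, hη]
    rw [hQu, hLz, hLu]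
    by_cases hzz : z = 0
    · have ht0 : t ≠ 0 := by
        intro ht
        apply hu
        funext k
        have := congrFun hzz k
        simp only [hzdef, Pi.zero_apply] at this
        rw [ht] at this
        simpa using this
      have hQz0 : (∑ i, lam i * (z i * z i)) = 0 := by
        apply Finset.sum_eq_zero
        intro k _
        rw [congrFun hzz k]
        simp
      rw [hQz0]
      have : 0 < t * t := mul_self_pos.mpr ht0
      have hcc : 0 < c * c := mul_pos_of_neg_of_neg hc hc
      nlinarith
    · have hQzpos := KeyPos z hzz hLz
      nlinarith [mul_self_nonneg t]

lemma euler_eval {h n : ℕ} (φ : MvPolynomial (Fin h) ℝ) (y : Fin h → ℝ)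
    (hp : ∑ j, X j * pderiv j φ = n • φ) :
    ∑ j, y j * eval y (pderiv j φ) = n * eval y φ := by
  have := congrArg (eval y) hp
  simp only [map_sum, _root_.map_mul, eval_X, map_nsmul, nsmul_eq_mul] at this
  simpa using this

lemma euler_eval2 {h : ℕ} (φ : MvPolynomial (Fin h) ℝ) (hφ : φ.IsHomogeneous 3)
    (y : Fin h → ℝ) (i : Fin h) :
    ∑ j, y j * eval y (pderiv i (pderiv j φ)) = 2 * eval y (pderiv i φ) := by
  have := congrArg (eval y) (euler_poly2 φ hφ i)
  simp only [map_sum, _root_.map_mul, eval_X, map_nsmul, nsmul_eq_mul] at this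
  simpa using this

lemma diag_quad {h : ℕ} (A : Matrix (Fin h) (Fin h) ℝ) (hA : A.IsHermitian)
    (x x' : Fin h → ℝ) :
    x ⬝ᵥ A *ᵥ x' = ∑ i, hA.eigenvalues i *
      (((↑hA.eigenvectorUnitary : Matrix (Fin h) (Fin h) ℝ)ᵀ *ᵥ x) i *
       ((↑hA.eigenvectorUnitary : Matrix (Fin h) (Fin h) ℝ)ᵀ *ᵥ x') i) := by
  have hsU : star (↑hA.eigenvectorUnitary : Matrix (Fin h) (Fin h) ℝ)
      = (↑hA.eigenvectorUnitary : Matrix (Fin h) (Fin h) ℝ)ᵀ := by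
    rw [Matrix.star_eq_conjTranspose, conjTranspose_eq_transpose_of_trivial]
  have hspec : A = (↑hA.eigenvectorUnitary : Matrix (Fin h) (Fin h) ℝ) *
      diagonal hA.eigenvalues * (↑hA.eigenvectorUnitary : Matrix (Fin h) (Fin h) ℝ)ᵀ := by
    have h2 := hA.spectral_theorem
    rw [Unitary.conjStarAlgAut_apply, RCLike.ofReal_real_eq_id, hsU] at h2
    simpa using h2
  conv_lhs => rw [hspec]
  rw [← mulVec_mulVec, ← mulVec_mulVec, dotProduct_mulVec, ← mulVec_transpose]
  rw [dotProduct]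
  refine Finset.sum_congr rfl fun i _ => ?_
  rw [mulVec_diagonal]
  ring

/-- The key linear-algebra step for the Hodge–Riemann inequalities attached to a real
homogeneous cubic `φ`: if `φ(y) < 0`, then the matrix
`M_{ij} = φ(y)·(∂²φ/∂x_i∂x_j)(y) − (∂φ/∂x_i)(y)·(∂φ/∂x_j)(y)` is negative definite
if and only if the Hessian `((∂²φ/∂x_i∂x_j)(y))` has exactly `h−1` positive
eigenvalues and exactly `1` negative eigenvalue (with multiplicity). -/
theorem stmt13 {h : ℕ} (φ : MvPolynomial (Fin h) ℝ) (hφ : φ.IsHomogeneous 3)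
    (y : Fin h → ℝ) (hy : eval y φ < 0)
    (M : Matrix (Fin h) (Fin h) ℝ)
    (hM : M = Matrix.of fun i j =>
      eval y φ * eval y (pderiv i (pderiv j φ))
        - eval y (pderiv i φ) * eval y (pderiv j φ))
    (Hess : Matrix (Fin h) (Fin h) ℝ)
    (hHess : Hess = Matrix.of fun i j => eval y (pderiv i (pderiv j φ)))
    (hH : Hess.IsHermitian) :
    (∀ x : Fin h → ℝ, x ≠ 0 → x ⬝ᵥ M.mulVec x < 0) ↔
      ((Finset.univ.filter fun i => 0 < hH.eigenvalues i).card = h - 1 ∧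
        (Finset.univ.filter fun i => hH.eigenvalues i < 0).card = 1) := by
  have hsym : Hessᵀ = Hess := by
    rw [← conjTranspose_eq_transpose_of_trivial]; exact hH
  have hgy : ∑ j, (eval y (pderiv j φ)) * y j = 3 * eval y φ := by
    have h1 := euler_eval φ y (euler_poly φ hφ)
    push_cast at h1
    rw [← h1]
    exact Finset.sum_congr rfl fun j _ => mul_comm _ _
  have hHy : Hess *ᵥ y = fun i => 2 * eval y (pderiv i φ) := by
    funext i
    have h1 := euler_eval2 φ hφ y i
    simp only [hHess, mulVec, dotProduct, Matrix.of_apply]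
    rw [← h1]
    exact Finset.sum_congr rfl fun j _ => mul_comm _ _
  have hyHy : y ⬝ᵥ Hess *ᵥ y = 6 * eval y φ := by
    rw [dotProduct_mulVec, ← mulVec_transpose, hsym, hHy, dotProduct]
    rw [show (6:ℝ) * eval y φ = 2 * (3 * eval y φ) by ring, ← hgy, Finset.mul_sum]
    exact Finset.sum_congr rfl fun j _ => by ring
  have hgx : ∀ x : Fin h → ℝ,
      (fun i => eval y (pderiv i φ)) ⬝ᵥ x = (1/2) * (y ⬝ᵥ Hess *ᵥ x) := by
    intro x
    rw [dotProduct_mulVec, ← mulVec_transpose, hsym, hHy, dotProduct, dotProduct, Finset.mul_sum]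
    exact Finset.sum_congr rfl fun i _ => by ring
  have hMform : ∀ x : Fin h → ℝ, x ⬝ᵥ M *ᵥ x =
      eval y φ * (x ⬝ᵥ Hess *ᵥ x) - ((fun i => eval y (pderiv i φ)) ⬝ᵥ x)^2 := by
    intro x
    have hMv : ∀ i, (M *ᵥ x) i = eval y φ * ((Hess *ᵥ x) i)
        - eval y (pderiv i φ) * ((fun i => eval y (pderiv i φ)) ⬝ᵥ x) := by
      intro i
      simp only [hM, hHess, mulVec, dotProduct, Matrix.of_apply]
      rw [Finset.mul_sum, Finset.mul_sum, ← Finset.sum_sub_distrib]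
      exact Finset.sum_congr rfl fun j _ => by ring
    have e1 : ∑ i, x i * (M *ᵥ x) i
        = ∑ i, (eval y φ * (x i * (Hess *ᵥ x) i)
            - (x i * eval y (pderiv i φ)) * ((fun i => eval y (pderiv i φ)) ⬝ᵥ x)) := by
      refine Finset.sum_congr rfl fun i _ => ?_
      rw [hMv i]; ring
    have e2 : x ⬝ᵥ M *ᵥ x = ∑ i, x i * (M *ᵥ x) i := rfl
    have e3 : x ⬝ᵥ Hess *ᵥ x = ∑ i, x i * (Hess *ᵥ x) i := rfl
    have e4 : (fun i => eval y (pderiv i φ)) ⬝ᵥ x = ∑ i, x i * eval y (pderiv i φ) := by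
      rw [dotProduct]; exact Finset.sum_congr rfl fun i _ => mul_comm _ _
    rw [e2, e1, Finset.sum_sub_distrib, ← Finset.mul_sum, ← Finset.sum_mul, e3, pow_two]
    rw [e4]
  have hUU : ∀ v : Fin h → ℝ, (↑hH.eigenvectorUnitary : Matrix (Fin h) (Fin h) ℝ)ᵀ *ᵥ
      ((↑hH.eigenvectorUnitary : Matrix (Fin h) (Fin h) ℝ) *ᵥ v) = v := by
    intro v
    rw [mulVec_mulVec]
    have h1 : (↑hH.eigenvectorUnitary : Matrix (Fin h) (Fin h) ℝ)ᵀ *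
        (↑hH.eigenvectorUnitary : Matrix (Fin h) (Fin h) ℝ) = 1 := by
      rw [← conjTranspose_eq_transpose_of_trivial, ← Matrix.star_eq_conjTranspose]
      exact Unitary.coe_star_mul_self hH.eigenvectorUnitary
    rw [h1, one_mulVec]
  have hUU' : ∀ v : Fin h → ℝ, (↑hH.eigenvectorUnitary : Matrix (Fin h) (Fin h) ℝ) *ᵥ
      ((↑hH.eigenvectorUnitary : Matrix (Fin h) (Fin h) ℝ)ᵀ *ᵥ v) = v := by
    intro v
    rw [mulVec_mulVec]
    have h1 : (↑hH.eigenvectorUnitary : Matrix (Fin h) (Fin h) ℝ) *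
        (↑hH.eigenvectorUnitary : Matrix (Fin h) (Fin h) ℝ)ᵀ = 1 := by
      rw [← conjTranspose_eq_transpose_of_trivial, ← Matrix.star_eq_conjTranspose]
      exact Unitary.coe_mul_star_self hH.eigenvectorUnitary
    rw [h1, one_mulVec]
  have hform : ∀ x : Fin h → ℝ, x ⬝ᵥ M *ᵥ x =
      eval y φ * (∑ i, hH.eigenvalues i *
          (((↑hH.eigenvectorUnitary : Matrix (Fin h) (Fin h) ℝ)ᵀ *ᵥ x) i *
           ((↑hH.eigenvectorUnitary : Matrix (Fin h) (Fin h) ℝ)ᵀ *ᵥ x) i))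
        - ((1/2) * ∑ i, hH.eigenvalues i *
          (((↑hH.eigenvectorUnitary : Matrix (Fin h) (Fin h) ℝ)ᵀ *ᵥ y) i *
           ((↑hH.eigenvectorUnitary : Matrix (Fin h) (Fin h) ℝ)ᵀ *ᵥ x) i))^2 := by
    intro x
    rw [hMform x, hgx x, diag_quad Hess hH x x, diag_quad Hess hH y x]
  have hηsum : ∑ i, hH.eigenvalues i *
      (((↑hH.eigenvectorUnitary : Matrix (Fin h) (Fin h) ℝ)ᵀ *ᵥ y) i *
       ((↑hH.eigenvectorUnitary : Matrix (Fin h) (Fin h) ℝ)ᵀ *ᵥ y) i) = 6 * eval y φ := by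
    rw [← diag_quad Hess hH y y, hyHy]
  have hcore := core hH.eigenvalues
    ((↑hH.eigenvectorUnitary : Matrix (Fin h) (Fin h) ℝ)ᵀ *ᵥ y) (eval y φ) hy hηsum
  constructor
  · intro H
    refine hcore.mp ?_
    intro u hu
    have hx : (↑hH.eigenvectorUnitary : Matrix (Fin h) (Fin h) ℝ) *ᵥ u ≠ 0 := by
      intro h0
      apply hu
      rw [← hUU u, h0, mulVec_zero]
    have := H _ hx
    rwa [hform, hUU u] at this
  · intro hcounts x hx
    have hu : (↑hH.eigenvectorUnitary : Matrix (Fin h) (Fin h) ℝ)ᵀ *ᵥ x ≠ 0 := by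
      intro h0
      apply hx
      rw [← hUU' x, h0, mulVec_zero]
    have := hcore.mpr hcounts _ hu
    rw [hform x]
    exact this
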